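/- (Lemma 8) Fix costs c_i and qualities q_i, let B ≥ 1 and ρ ∈ [0,1]. Let (O, p^OPT) be an optimal solution to the joint sequencing and pricing problem, i.e., O is a duplicate-free list with |O| ≤ B and f(O, p^OPT) ≥ f(L, p) for every duplicate-free list L with |L| ≤ B and every price vector p; assume p^OPT_i ≥ c_i for all i and f(O, p^OPT) > 0. Then there exists a nonempty duplicate-free list R with |R| ≤ B such that every position t of R has reachability Θ_t = Π_{j<t} θ_{r_j} ≥ ρ and the set ℛ underlying R satisfies g(ℛ, p^OPT) ≥ (1 − ρ) f(O, p^OPT). -/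

import Mathlib

/-- MNL expected revenue of a finite set `S` of products, where product `i`
has revenue `α i` and preference weight `β i`. -/
noncomputable def g (α β : ℕ → ℝ) (S : Finset ℕ) : ℝ :=
  (∑ i ∈ S, α i * β i) / ((∑ i ∈ S, β i) + 1)

/-- Reachability of (0-based) position `t` of the sequence `S` under the
cascade browse model: the product of the continuation probabilities of all
earlier products. -/
noncomputable def reach (θ : ℕ → ℝ) (S : List ℕ) (t : ℕ) : ℝ :=
  ∏ j ∈ Finset.range t, θ (S.getD j 0)

/-- Expected revenue of a sequence of products `S` under the cascade browse
model combined with the MNL choice model. -/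
noncomputable def f (α β θ : ℕ → ℝ) (S : List ℕ) : ℝ :=
  (∑ t ∈ Finset.range (S.length - 1),
      reach θ S t * (1 - θ (S.getD t 0)) * g α β (S.take (t + 1)).toFinset)
    + reach θ S (S.length - 1) * g α β S.toFinset
/-- MNL expected revenue of a finite set `S` of products at prices `p`, where
product `i` has quality `q i` and cost `c i`. -/
noncomputable def gp (q c p : ℕ → ℝ) (S : Finset ℕ) : ℝ :=
  (∑ i ∈ S, (p i - c i) * Real.exp (q i - p i)) /
    ((∑ i ∈ S, Real.exp (q i - p i)) + 1)

/-- Expected revenue of a sequence of products `S` at prices `p` under the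
cascade browse model combined with the MNL choice model. -/
noncomputable def fp (q c θ p : ℕ → ℝ) (S : List ℕ) : ℝ :=
  (∑ t ∈ Finset.range (S.length - 1),
      reach θ S t * (1 - θ (S.getD t 0)) * gp q c p (S.take (t + 1)).toFinset)
    + reach θ S (S.length - 1) * gp q c p S.toFinset

lemma gp_nonneg (q c p : ℕ → ℝ) (hp : ∀ i, c i ≤ p i) (S : Finset ℕ) :
    0 ≤ gp q c p S := by
  apply div_nonneg
  · exact Finset.sum_nonneg fun i _ => mul_nonneg (by linarith [hp i]) (Real.exp_pos _).le
  · positivity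

lemma gp_union_le (q c p : ℕ → ℝ) (hp : ∀ i, c i ≤ p i) {A B : Finset ℕ}
    (h : Disjoint A B) : gp q c p (A ∪ B) ≤ gp q c p A + gp q c p B := by
  have hN : ∀ S : Finset ℕ, 0 ≤ ∑ i ∈ S, (p i - c i) * Real.exp (q i - p i) :=
    fun S => Finset.sum_nonneg fun i _ => mul_nonneg (by linarith [hp i]) (Real.exp_pos _).le
  have hD : ∀ S : Finset ℕ, 0 ≤ ∑ i ∈ S, Real.exp (q i - p i) :=
    fun S => Finset.sum_nonneg fun i _ => (Real.exp_pos _).le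
  rw [gp, gp, gp, Finset.sum_union h, Finset.sum_union h, add_div]
  have h1 : (0:ℝ) < (∑ i ∈ A, Real.exp (q i - p i)) + 1 := by linarith [hD A]
  have h2 : (0:ℝ) < (∑ i ∈ B, Real.exp (q i - p i)) + 1 := by linarith [hD B]
  apply add_le_add
  · exact div_le_div_of_nonneg_left (hN A) h1 (by linarith [hD B])
  · exact div_le_div_of_nonneg_left (hN B) h2 (by linarith [hD A])

/-- Lemma 8: pricing analogue of Lemma 2. -/
theorem stmt16 (q c θ : ℕ → ℝ) (hθ : ∀ i, 0 ≤ θ i ∧ θ i ≤ 1)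
    (B : ℕ) (hB : 1 ≤ B) (ρ : ℝ) (hρ0 : 0 ≤ ρ) (hρ1 : ρ ≤ 1)
    (O : List ℕ) (pOPT : ℕ → ℝ) (hO : O.Nodup) (hOB : O.length ≤ B)
    (hp : ∀ i, c i ≤ pOPT i)
    (hopt : ∀ (L : List ℕ) (p : ℕ → ℝ), L.Nodup → L.length ≤ B →
        fp q c θ p L ≤ fp q c θ pOPT O)
    (hfO : 0 < fp q c θ pOPT O) :
    ∃ R : List ℕ, R ≠ [] ∧ R.Nodup ∧ R.length ≤ B ∧
      (∀ t < R.length, ρ ≤ reach θ R t) ∧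
      (1 - ρ) * fp q c θ pOPT O ≤ gp q c pOPT R.toFinset := by
  classical
  have hO0 : O ≠ [] := by
    intro h; rw [h] at hfO; simp [fp, gp, reach] at hfO
  have hk1 : 1 ≤ O.length := List.length_pos_iff.mpr hO0
  have hrs : ∀ t, reach θ O (t + 1) = reach θ O t * θ (O.getD t 0) :=
    fun t => Finset.prod_range_succ _ t
  have hr0 : reach θ O 0 = 1 := Finset.prod_range_zero _
  have hrnn : ∀ t, 0 ≤ reach θ O t :=
    fun t => Finset.prod_nonneg fun j _ => (hθ _).1
  have hstep : ∀ t, 0 ≤ reach θ O t - reach θ O (t + 1) := by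
    intro t
    rw [hrs t]
    nlinarith [hrnn t, (hθ (O.getD t 0)).2, (hθ (O.getD t 0)).1]
  have hgetD_take : ∀ (n j : ℕ), j < n → (O.take n).getD j 0 = O.getD j 0 := by
    intro n j hj
    rw [List.getD_eq_getElem?_getD, List.getD_eq_getElem?_getD, List.getElem?_take, if_pos hj]
  have hgetD_drop : ∀ (T j : ℕ), (O.drop T).getD j 0 = O.getD (T + j) 0 := by
    intro T j
    rw [List.getD_eq_getElem?_getD, List.getD_eq_getElem?_getD, List.getElem?_drop]
  have hreach_take : ∀ (n t : ℕ), t ≤ n → reach θ (O.take n) t = reach θ O t := by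
    intro n t htn
    unfold reach
    exact Finset.prod_congr rfl fun j hj => by
      rw [hgetD_take n j (lt_of_lt_of_le (Finset.mem_range.mp hj) htn)]
  have hreach_drop : ∀ (T s : ℕ), reach θ O (T + s) = reach θ O T * reach θ (O.drop T) s := by
    intro T s
    unfold reach
    rw [Finset.prod_range_add]
    congr 1
    exact Finset.prod_congr rfl fun j _ => by rw [hgetD_drop]
  have hfp_eq : ∀ L : List ℕ, fp q c θ pOPT L
      = (∑ t ∈ Finset.range (L.length - 1),
          (reach θ L t - reach θ L (t + 1)) * gp q c pOPT (L.take (t + 1)).toFinset)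
        + reach θ L (L.length - 1) * gp q c pOPT (L.take L.length).toFinset := by
    intro L
    rw [fp, List.take_length]
    congr 1
    refine Finset.sum_congr rfl fun t _ => ?_
    have h : reach θ L (t + 1) = reach θ L t * θ (L.getD t 0) := Finset.prod_range_succ _ t
    rw [h]; ring
  have hGnn : ∀ S : Finset ℕ, 0 ≤ gp q c pOPT S := gp_nonneg q c pOPT hp
  by_cases hall : ∀ t < O.length, ρ ≤ reach θ O t
  · -- easy case: all reaches ≥ ρ
    obtain ⟨ts, htsmem, htsmax⟩ := (Finset.Icc 1 O.length).exists_max_image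
      (fun n => gp q c pOPT (O.take n).toFinset)
      ⟨1, Finset.mem_Icc.mpr ⟨le_rfl, hk1⟩⟩
    obtain ⟨h1ts, htsk⟩ := Finset.mem_Icc.mp htsmem
    have hRlen : (O.take ts).length = ts := by
      rw [List.length_take]; omega
    have hbound : fp q c θ pOPT O ≤ gp q c pOPT (O.take ts).toFinset := by
      rw [hfp_eq O]
      have h1 : ∑ t ∈ Finset.range (O.length - 1),
            (reach θ O t - reach θ O (t + 1)) * gp q c pOPT (O.take (t + 1)).toFinset
          ≤ ∑ t ∈ Finset.range (O.length - 1),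
            (reach θ O t - reach θ O (t + 1)) * gp q c pOPT (O.take ts).toFinset := by
        refine Finset.sum_le_sum fun t ht => ?_
        refine mul_le_mul_of_nonneg_left ?_ (hstep t)
        exact htsmax (t + 1) (Finset.mem_Icc.mpr ⟨by omega, by
          have := Finset.mem_range.mp ht; omega⟩)
      have h2 : reach θ O (O.length - 1) * gp q c pOPT (O.take O.length).toFinset
          ≤ reach θ O (O.length - 1) * gp q c pOPT (O.take ts).toFinset :=
        mul_le_mul_of_nonneg_left
          (htsmax O.length (Finset.mem_Icc.mpr ⟨hk1, le_rfl⟩)) (hrnn _)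
      have h3 : ∑ t ∈ Finset.range (O.length - 1),
            (reach θ O t - reach θ O (t + 1)) * gp q c pOPT (O.take ts).toFinset
          = (1 - reach θ O (O.length - 1)) * gp q c pOPT (O.take ts).toFinset := by
        rw [← Finset.sum_mul, Finset.sum_range_sub' (reach θ O) (O.length - 1), hr0]
      calc _ ≤ (1 - reach θ O (O.length - 1)) * gp q c pOPT (O.take ts).toFinset
              + reach θ O (O.length - 1) * gp q c pOPT (O.take ts).toFinset :=
            add_le_add (h1.trans (le_of_eq h3)) h2
        _ = gp q c pOPT (O.take ts).toFinset := by ring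
    refine ⟨O.take ts, ?_, List.Nodup.sublist (List.take_sublist ts O) hO, ?_, ?_, ?_⟩
    · exact List.length_pos_iff.mp (by omega)
    · omega
    · intro t ht
      rw [hRlen] at ht
      rw [hreach_take ts t (le_of_lt ht)]
      exact hall t (by omega)
    · nlinarith [hbound, hfO.le]
  · -- hard case
    push_neg at hall
    obtain ⟨t0, ht0k, ht0⟩ := hall
    have hex : ∃ t, reach θ O t < ρ := ⟨t0, ht0⟩
    set T := Nat.find hex with hTdef
    have hTρ : reach θ O T < ρ := Nat.find_spec hex
    have hTmin : ∀ s, s < T → ρ ≤ reach θ O s :=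
      fun s hs => le_of_not_gt (Nat.find_min hex hs)
    have hT1 : 1 ≤ T := by
      by_contra h
      have hT0 : T = 0 := by omega
      rw [hT0, hr0] at hTρ
      linarith
    have hTk : T ≤ O.length - 1 := by
      have h1 : T ≤ t0 := Nat.find_min' hex ht0
      omega
    -- argmax over prefixes of length 1..T
    obtain ⟨ts, htsmem, htsmax⟩ := (Finset.Icc 1 T).exists_max_image
      (fun n => gp q c pOPT (O.take n).toFinset)
      ⟨1, Finset.mem_Icc.mpr ⟨le_rfl, hT1⟩⟩
    obtain ⟨h1ts, htsT⟩ := Finset.mem_Icc.mp htsmem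
    set C := gp q c pOPT (O.take ts).toFinset with hCdef
    have hC : ∀ u, 1 ≤ u → u ≤ T → gp q c pOPT (O.take u).toFinset ≤ C :=
      fun u h1 h2 => htsmax u (Finset.mem_Icc.mpr ⟨h1, h2⟩)
    have hCnn : 0 ≤ C := hGnn _
    set W := reach θ O T with hWdef
    have hW0 : 0 ≤ W := hrnn T
    -- the dropped list
    set D := O.drop T with hDdef
    have hDlen : D.length = O.length - T := List.length_drop
    have hDnodup : D.Nodup := List.Nodup.sublist (List.drop_sublist T O) hO
    have hfpD : fp q c θ pOPT D ≤ fp q c θ pOPT O :=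
      hopt D pOPT hDnodup (by omega)
    -- set decomposition and disjointness
    have hdisj : ∀ s : ℕ, Disjoint (O.take T).toFinset ((O.drop T).take s).toFinset := by
      intro s
      apply List.disjoint_toFinset_iff_disjoint.mpr
      intro a ha ha'
      exact (List.disjoint_take_drop hO le_rfl) ha (List.mem_of_mem_take ha')
    have hsub : ∀ s : ℕ, gp q c pOPT (O.take (T + s)).toFinset
        ≤ gp q c pOPT (O.take T).toFinset + gp q c pOPT ((O.drop T).take s).toFinset := by
      intro s
      rw [List.take_add, List.toFinset_append]
      exact gp_union_le q c pOPT hp (hdisj s)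
    -- multiply fp D by W
    have hWfpD : W * fp q c θ pOPT D
        = (∑ s ∈ Finset.range (O.length - T - 1),
            (reach θ O (T + s) - reach θ O (T + s + 1))
              * gp q c pOPT ((O.drop T).take (s + 1)).toFinset)
          + reach θ O (O.length - 1) * gp q c pOPT ((O.drop T).take (O.length - T)).toFinset := by
      rw [hfp_eq D, mul_add, Finset.mul_sum, hDlen]
      congr 1
      · refine Finset.sum_congr rfl fun s _ => ?_
        have e1 : reach θ O (T + s) = W * reach θ D s := hreach_drop T s
        have e2 : reach θ O (T + s + 1) = W * reach θ D (s + 1) := hreach_drop T (s + 1)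
        rw [e1, e2]
        ring
      · have e3 : reach θ O (T + (O.length - T - 1)) = W * reach θ D (O.length - T - 1) :=
          hreach_drop T (O.length - T - 1)
        have e4 : T + (O.length - T - 1) = O.length - 1 := by omega
        rw [e4] at e3
        rw [e3]
        ring
    -- decompose fp O
    have hsplitlen : O.length - 1 = T + (O.length - T - 1) := by omega
    have hFsplit : fp q c θ pOPT O
        = (∑ t ∈ Finset.range T,
            (reach θ O t - reach θ O (t + 1)) * gp q c pOPT (O.take (t + 1)).toFinset)
          + (∑ s ∈ Finset.range (O.length - T - 1),
            (reach θ O (T + s) - reach θ O (T + s + 1))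
              * gp q c pOPT (O.take (T + s + 1)).toFinset)
          + reach θ O (O.length - 1) * gp q c pOPT (O.take O.length).toFinset := by
      rw [hfp_eq O, hsplitlen, Finset.sum_range_add]
    -- head bound
    have hhead : (∑ t ∈ Finset.range T,
          (reach θ O t - reach θ O (t + 1)) * gp q c pOPT (O.take (t + 1)).toFinset)
        ≤ (1 - W) * C := by
      calc _ ≤ ∑ t ∈ Finset.range T, (reach θ O t - reach θ O (t + 1)) * C := by
              refine Finset.sum_le_sum fun t ht => ?_
              refine mul_le_mul_of_nonneg_left ?_ (hstep t)
              exact hC (t + 1) (by omega) (by have := Finset.mem_range.mp ht; omega)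
        _ = (1 - W) * C := by
              rw [← Finset.sum_mul, Finset.sum_range_sub' (reach θ O) T, hr0]
    -- tail bound
    have htail : (∑ s ∈ Finset.range (O.length - T - 1),
          (reach θ O (T + s) - reach θ O (T + s + 1))
            * gp q c pOPT (O.take (T + s + 1)).toFinset)
        ≤ (W - reach θ O (O.length - 1)) * gp q c pOPT (O.take T).toFinset
          + (∑ s ∈ Finset.range (O.length - T - 1),
              (reach θ O (T + s) - reach θ O (T + s + 1))
                * gp q c pOPT ((O.drop T).take (s + 1)).toFinset) := by
      have h1 : (∑ s ∈ Finset.range (O.length - T - 1),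
            (reach θ O (T + s) - reach θ O (T + s + 1))
              * gp q c pOPT (O.take (T + s + 1)).toFinset)
          ≤ ∑ s ∈ Finset.range (O.length - T - 1),
            (reach θ O (T + s) - reach θ O (T + s + 1))
              * (gp q c pOPT (O.take T).toFinset
                 + gp q c pOPT ((O.drop T).take (s + 1)).toFinset) := by
        refine Finset.sum_le_sum fun s _ => ?_
        refine mul_le_mul_of_nonneg_left ?_ (hstep (T + s))
        exact hsub (s + 1)
      have h2 : (∑ s ∈ Finset.range (O.length - T - 1),
            (reach θ O (T + s) - reach θ O (T + s + 1))
              * (gp q c pOPT (O.take T).toFinset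
                 + gp q c pOPT ((O.drop T).take (s + 1)).toFinset))
          = (W - reach θ O (O.length - 1)) * gp q c pOPT (O.take T).toFinset
            + (∑ s ∈ Finset.range (O.length - T - 1),
                (reach θ O (T + s) - reach θ O (T + s + 1))
                  * gp q c pOPT ((O.drop T).take (s + 1)).toFinset) := by
        rw [Finset.sum_congr rfl (fun s _ => mul_add
              (reach θ O (T + s) - reach θ O (T + s + 1))
              (gp q c pOPT (O.take T).toFinset)
              (gp q c pOPT ((O.drop T).take (s + 1)).toFinset)),
            Finset.sum_add_distrib, ← Finset.sum_mul]
        have e6 : (∑ i ∈ Finset.range (O.length - T - 1),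
              (reach θ O (T + i) - reach θ O (T + i + 1)))
            = reach θ O (T + 0) - reach θ O (T + (O.length - T - 1)) :=
          Finset.sum_range_sub' (fun s => reach θ O (T + s)) (O.length - T - 1)
        have e4 : T + (O.length - T - 1) = O.length - 1 := by omega
        rw [e6, Nat.add_zero, e4, hWdef]
      exact h1.trans (le_of_eq h2)
    -- final term bound
    have hlast : reach θ O (O.length - 1) * gp q c pOPT (O.take O.length).toFinset
        ≤ reach θ O (O.length - 1) * (gp q c pOPT (O.take T).toFinset
            + gp q c pOPT ((O.drop T).take (O.length - T)).toFinset) := by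
      refine mul_le_mul_of_nonneg_left ?_ (hrnn _)
      have e5 : O.length = T + (O.length - T) := by omega
      calc gp q c pOPT (O.take O.length).toFinset
          = gp q c pOPT (O.take (T + (O.length - T))).toFinset := by rw [← e5]
        _ ≤ _ := hsub (O.length - T)
    -- combine
    have hGT : gp q c pOPT (O.take T).toFinset ≤ C := hC T hT1 le_rfl
    have hmain : fp q c θ pOPT O ≤ C + W * fp q c θ pOPT O := by
      have hcomb : fp q c θ pOPT O
          ≤ (1 - W) * C + W * gp q c pOPT (O.take T).toFinset + W * fp q c θ pOPT D := by
        rw [hFsplit, hWfpD]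
        have := add_le_add (add_le_add hhead htail) hlast
        calc (∑ t ∈ Finset.range T,
              (reach θ O t - reach θ O (t + 1)) * gp q c pOPT (O.take (t + 1)).toFinset)
            + (∑ s ∈ Finset.range (O.length - T - 1),
              (reach θ O (T + s) - reach θ O (T + s + 1))
                * gp q c pOPT (O.take (T + s + 1)).toFinset)
            + reach θ O (O.length - 1) * gp q c pOPT (O.take O.length).toFinset ≤ _ := this
          _ = _ := by ring
      have hWD : W * fp q c θ pOPT D ≤ W * fp q c θ pOPT O :=
        mul_le_mul_of_nonneg_left hfpD hW0
      have hWGT : W * gp q c pOPT (O.take T).toFinset ≤ W * C :=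
        mul_le_mul_of_nonneg_left hGT hW0
      calc fp q c θ pOPT O ≤ _ := hcomb
        _ ≤ (1 - W) * C + W * C + W * fp q c θ pOPT O := by linarith
        _ = C + W * fp q c θ pOPT O := by ring
    -- conclude
    have hfinal : (1 - ρ) * fp q c θ pOPT O ≤ C := by
      nlinarith [hfO.le, hTρ, hmain]
    have hRlen : (O.take ts).length = ts := by
      rw [List.length_take]; omega
    refine ⟨O.take ts, ?_, List.Nodup.sublist (List.take_sublist ts O) hO, ?_, ?_, hfinal⟩
    · exact List.length_pos_iff.mp (by omega)
    · omega
    · intro t ht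
      rw [hRlen] at ht
      rw [hreach_take ts t (le_of_lt ht)]
      exact hTmin t (by omega)
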